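/- Define g(n) := (t₁(n)/t₂(n))^{2n−7} for real (or integer) n ≥ 4, where t₁(n) := (−(n−2)(2n−3) − √(3(n−2)(2n−3)))/(2(2n−1)(2n−3)) and t₂(n) := (−(n−2)(2n−3) + √(3(n−2)(2n−3)))/(2(2n−1)(2n−3)). Then g is strictly increasing for n ≥ 4 and g(n) → e^{2√6} as n → ∞. -/

import Mathlib

/-- The smaller root `t₁(n)` of the quadratic `4(2n−3)(2n−1)t² + 4(n−2)(2n−3)t + (n−2)(n−3)`. -/
noncomputable def t1 (n : ℕ) : ℝ :=
  (-(((n : ℝ) - 2) * (2 * (n : ℝ) - 3)) - Real.sqrt (3 * ((n : ℝ) - 2) * (2 * (n : ℝ) - 3))) /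
    (2 * (2 * (n : ℝ) - 1) * (2 * (n : ℝ) - 3))

/-- The larger root `t₂(n)` of the quadratic `4(2n−3)(2n−1)t² + 4(n−2)(2n−3)t + (n−2)(n−3)`. -/
noncomputable def t2 (n : ℕ) : ℝ :=
  (-(((n : ℝ) - 2) * (2 * (n : ℝ) - 3)) + Real.sqrt (3 * ((n : ℝ) - 2) * (2 * (n : ℝ) - 3))) /
    (2 * (2 * (n : ℝ) - 1) * (2 * (n : ℝ) - 3))

/-- The function `g(n) = (t₁(n)/t₂(n))^{2n−7}`. -/
noncomputable def g (n : ℕ) : ℝ := (t1 n / t2 n) ^ (2 * n - 7)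

open Real Filter

lemma key_log {x : ℝ} (h0 : 0 ≤ x) (h1 : x < 1) :
    2*x + 2*x^3/3 ≤ Real.log (1+x) - Real.log (1-x) := by
  set φ : ℝ → ℝ := fun x => Real.log (1+x) - Real.log (1-x) - 2*x - 2*x^3/3 with hφ
  have hder : ∀ y ∈ Set.Ico (0:ℝ) 1,
      HasDerivAt φ (1/(1+y) + 1/(1-y) - 2 - 2*y^2) y := by
    intro y hy
    have h1y : (0:ℝ) < 1 + y := by linarith [hy.1]
    have h2y : (0:ℝ) < 1 - y := by linarith [hy.2]
    have d1 : HasDerivAt (fun z : ℝ => Real.log (1+z)) (1/(1+y)) y := by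
      simpa using (((hasDerivAt_id y).const_add 1).log (by positivity))
    have d2 : HasDerivAt (fun z : ℝ => Real.log (1-z)) (-(1/(1-y))) y := by
      have : HasDerivAt (fun z : ℝ => 1 - z) (-1) y := by
        simpa using ((hasDerivAt_id y).const_sub 1)
      simpa [neg_div, div_eq_mul_inv] using (this.log (by positivity))
    have d3 : HasDerivAt (fun z : ℝ => 2*z) 2 y := by
      simpa using ((hasDerivAt_id y).const_mul 2)
    have d4 : HasDerivAt (fun z : ℝ => 2*z^3/3) (2*y^2) y := by
      have := ((hasDerivAt_pow 3 y).const_mul 2).div_const 3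
      refine this.congr_deriv ?_
      push_cast; ring
    have h := ((d1.sub d2).sub d3).sub d4
    refine h.congr_deriv ?_
    ring
  have hmono : MonotoneOn φ (Set.Ico (0:ℝ) 1) := by
    apply monotoneOn_of_deriv_nonneg (convex_Ico 0 1)
    · exact fun y hy => ((hder y hy).continuousAt).continuousWithinAt
    · intro y hy
      rw [interior_Ico] at hy
      exact ((hder y ⟨le_of_lt hy.1, hy.2⟩).differentiableAt).differentiableWithinAt
    · intro y hy
      rw [interior_Ico] at hy
      rw [(hder y ⟨le_of_lt hy.1, hy.2⟩).deriv]
      have h2y : (0:ℝ) < 1 - y := by linarith [hy.2]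
      have h1y : (0:ℝ) < 1 + y := by linarith [hy.1]
      have key : 1/(1+y) + 1/(1-y) - 2 - 2*y^2 = 2*y^4/((1+y)*(1-y)) := by
        field_simp
        ring
      rw [key]
      positivity
  have h0' : φ 0 ≤ φ x := hmono ⟨le_refl 0, one_pos⟩ ⟨h0, h1⟩ h0
  simp [hφ] at h0'
  linarith

noncomputable def Aa (y : ℝ) : ℝ := 2*y^2 - 7*y + 6
noncomputable def uu (y : ℝ) : ℝ := Real.sqrt 3 / Real.sqrt (Aa y)
noncomputable def FF (y : ℝ) : ℝ := (2*y - 7) * (Real.log (1 + uu y) - Real.log (1 - uu y))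

lemma Aa_ge {y : ℝ} (hy : 4 ≤ y) : 10 ≤ Aa y := by
  unfold Aa; nlinarith

lemma sqrt3_lt {y : ℝ} (hy : 4 ≤ y) : Real.sqrt 3 < Real.sqrt (Aa y) := by
  apply Real.sqrt_lt_sqrt (by norm_num)
  linarith [Aa_ge hy]

lemma uu_mem {y : ℝ} (hy : 4 ≤ y) : 0 < uu y ∧ uu y < 1 := by
  have h3 : (0:ℝ) < Real.sqrt 3 := Real.sqrt_pos.2 (by norm_num)
  have hlt := sqrt3_lt hy
  constructor
  · exact div_pos h3 (lt_trans h3 hlt)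
  · have : uu y = Real.sqrt 3 / Real.sqrt (Aa y) := rfl
    rw [this, div_lt_one (lt_trans h3 hlt)]; exact hlt

lemma hasDerivAt_FF {y : ℝ} (hy : 4 ≤ y) :
    HasDerivAt FF (2*(Real.log (1 + uu y) - Real.log (1 - uu y))
      + (2*y-7) * (-(Real.sqrt 3 * (4*y-7)) /
        (Real.sqrt (Aa y) * (Real.sqrt (Aa y) + Real.sqrt 3) * (Real.sqrt (Aa y) - Real.sqrt 3)))) y := by
  have hApos : (0:ℝ) < Aa y := by linarith [Aa_ge hy]
  have hqpos : (0:ℝ) < Real.sqrt (Aa y) := Real.sqrt_pos.2 hApos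
  have hq2 : Real.sqrt (Aa y) ^ 2 = Aa y := Real.sq_sqrt hApos.le
  have hs2 : Real.sqrt 3 ^ 2 = (3:ℝ) := Real.sq_sqrt (by norm_num)
  have hspos : (0:ℝ) < Real.sqrt 3 := Real.sqrt_pos.2 (by norm_num)
  have hsq : Real.sqrt 3 < Real.sqrt (Aa y) := sqrt3_lt hy
  have hu := uu_mem hy
  have h1u : (0:ℝ) < 1 + uu y := by linarith [hu.1]
  have h2u : (0:ℝ) < 1 - uu y := by linarith [hu.2]
  have hA : HasDerivAt Aa (4*y-7) y := by
    unfold Aa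
    have := ((hasDerivAt_pow 2 y).const_mul 2).sub ((hasDerivAt_id y).const_mul 7)
    have h2 := this.add_const 6
    refine h2.congr_deriv ?_
    push_cast; ring
  have hqd : HasDerivAt (fun z => Real.sqrt (Aa z)) ((4*y-7)/(2*Real.sqrt (Aa y))) y :=
    hA.sqrt (ne_of_gt hApos)
  have hud : HasDerivAt uu
      ((0 * Real.sqrt (Aa y) - Real.sqrt 3 * ((4*y-7)/(2*Real.sqrt (Aa y)))) / (Real.sqrt (Aa y))^2) y :=
    (hasDerivAt_const y (Real.sqrt 3)).div hqd (ne_of_gt hqpos)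
  set du := (0 * Real.sqrt (Aa y) - Real.sqrt 3 * ((4*y-7)/(2*Real.sqrt (Aa y)))) / (Real.sqrt (Aa y))^2 with hdu
  have d1 : HasDerivAt (fun z => Real.log (1 + uu z)) (du / (1 + uu y)) y := by
    have := (hud.const_add 1).log (ne_of_gt h1u)
    simpa using this
  have d2 : HasDerivAt (fun z => Real.log (1 - uu z)) (-du / (1 - uu y)) y := by
    have := (hud.const_sub 1).log (ne_of_gt h2u)
    simpa [neg_div] using this
  have dl : HasDerivAt (fun z => (2*z - 7)) 2 y := by
    simpa using ((hasDerivAt_id y).const_mul 2).sub_const 7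
  have h := dl.mul (d1.sub d2)
  have hthis : HasDerivAt FF (2 * (Real.log (1 + uu y) - Real.log (1 - uu y))
      + (2*y-7) * (du / (1 + uu y) - -du / (1 - uu y))) y := by
    unfold FF; exact h
  have huv : uu y = Real.sqrt 3 / Real.sqrt (Aa y) := rfl
  have hq0 : Real.sqrt (Aa y) ≠ 0 := ne_of_gt hqpos
  have hd3 : Real.sqrt (Aa y) + Real.sqrt 3 ≠ 0 := by positivity
  have hd4 : Real.sqrt (Aa y) - Real.sqrt 3 ≠ 0 := ne_of_gt (by linarith)
  have e2 : du / (1 + uu y) - -du / (1 - uu y)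
      = -(Real.sqrt 3 * (4*y-7)) /
        (Real.sqrt (Aa y) * (Real.sqrt (Aa y) + Real.sqrt 3) * (Real.sqrt (Aa y) - Real.sqrt 3)) := by
    rw [huv, hdu]
    rw [one_add_div hq0, one_sub_div hq0, div_div_eq_mul_div, div_div_eq_mul_div]
    field_simp
    rw [← hq2, Real.sqrt_sq hqpos.le]
    ring
  rw [e2] at hthis
  exact hthis

lemma poly_pos {y : ℝ} (hy : 4 ≤ y) : 0 < 28*y^3 - 164*y^2 + 315*y - 210 := by
  nlinarith [sq_nonneg (y-4), mul_nonneg (sub_nonneg.2 hy) (sq_nonneg (y-4))]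

lemma deriv_FF_pos {y : ℝ} (hy : 4 ≤ y) :
    0 < 2*(Real.log (1 + uu y) - Real.log (1 - uu y))
      + (2*y-7) * (-(Real.sqrt 3 * (4*y-7)) /
        (Real.sqrt (Aa y) * (Real.sqrt (Aa y) + Real.sqrt 3) * (Real.sqrt (Aa y) - Real.sqrt 3))) := by
  have hApos : (0:ℝ) < Aa y := by linarith [Aa_ge hy]
  set s := Real.sqrt 3 with hsdef
  set q := Real.sqrt (Aa y) with hqdef
  have hqpos : (0:ℝ) < q := Real.sqrt_pos.2 hApos
  have hq2 : q ^ 2 = Aa y := Real.sq_sqrt hApos.le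
  have hq2' : q ^ 2 = 2*y^2 - 7*y + 6 := by rw [hq2]; rfl
  have hs2 : s ^ 2 = (3:ℝ) := Real.sq_sqrt (by norm_num)
  have hspos : (0:ℝ) < s := Real.sqrt_pos.2 (by norm_num)
  have hsq : s < q := sqrt3_lt hy
  have hu := uu_mem hy
  have huv : uu y = s / q := rfl
  have hk := key_log hu.1.le hu.2
  rw [huv] at hk
  have hD : 0 < q*(q+s)*(q-s) := by
    apply mul_pos (mul_pos hqpos (by linarith)) (by linarith)
  have hRHS : 2*(2*(s/q)+2*(s/q)^3/3) = (12*s*q^2+4*s^3)/(3*q^3) := by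
    field_simp; ring
  have main : (2*y-7) * (s*(4*y-7)) / (q*(q+s)*(q-s)) < 2*(2*(s/q)+2*(s/q)^3/3) := by
    rw [hRHS, div_lt_div_iff₀ hD (by positivity)]
    have hpoly := poly_pos hy
    have hEq : (12*s*q^2+4*s^3)*(q*(q+s)*(q-s)) - (2*y-7)*(s*(4*y-7))*(3*q^3)
        = 3*s*q*(28*y^3-164*y^2+315*y-210) := by
      linear_combination (-8*q^3*s - 4*q*s*(s^2+3)) * hs2 + (s*q*(12*q^2 + 42*y - 99)) * hq2'
    nlinarith [hEq, mul_pos (mul_pos hspos hqpos) hpoly]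
  have hk2 : (2*y-7) * (s*(4*y-7)) / (q*(q+s)*(q-s)) < 2*((Real.log (1 + s/q) - Real.log (1 - s/q))) := by
    calc (2*y-7) * (s*(4*y-7)) / (q*(q+s)*(q-s)) < 2*(2*(s/q)+2*(s/q)^3/3) := main
    _ ≤ 2*((Real.log (1 + s/q) - Real.log (1 - s/q))) := by linarith
  rw [huv]
  have : (2*y-7) * (-(s * (4*y-7)) / (q*(q+s)*(q-s))) = -((2*y-7) * (s*(4*y-7)) / (q*(q+s)*(q-s))) := by
    ring
  rw [this]
  linarith

lemma FF_mono : StrictMonoOn FF (Set.Ici (4:ℝ)) := by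
  apply strictMonoOn_of_deriv_pos (convex_Ici 4)
  · intro y hy
    exact ((hasDerivAt_FF hy).continuousAt).continuousWithinAt
  · intro y hy
    rw [interior_Ici] at hy
    rw [(hasDerivAt_FF hy.le).deriv]
    exact deriv_FF_pos hy.le

lemma ratio_eq {n : ℕ} (hn : 4 ≤ n) :
    t1 n / t2 n = (1 + uu (n:ℝ)) / (1 - uu (n:ℝ)) := by
  have hy : (4:ℝ) ≤ (n:ℝ) := by exact_mod_cast hn
  set y := (n:ℝ) with hydef
  have hApos : (0:ℝ) < Aa y := by linarith [Aa_ge hy]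
  have hq2 : Real.sqrt (Aa y) ^ 2 = Aa y := Real.sq_sqrt hApos.le
  have hqpos : (0:ℝ) < Real.sqrt (Aa y) := Real.sqrt_pos.2 hApos
  have hsq : Real.sqrt 3 < Real.sqrt (Aa y) := sqrt3_lt hy
  have hspos : (0:ℝ) < Real.sqrt 3 := Real.sqrt_pos.2 (by norm_num)
  set s := Real.sqrt 3
  set q := Real.sqrt (Aa y)
  have h3a : 3 * (y-2) * (2*y-3) = 3 * Aa y := by unfold Aa; ring
  have hsqrt : Real.sqrt (3 * (y-2) * (2*y-3)) = s * q := by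
    rw [h3a, Real.sqrt_mul (by norm_num : (0:ℝ) ≤ 3)]
  have ha : (y-2) * (2*y-3) = q^2 := by rw [hq2]; unfold Aa; ring
  have hD : (2 * (2*y-1) * (2*y-3)) ≠ 0 :=
    ne_of_gt (by nlinarith : (0:ℝ) < 2 * (2*y-1) * (2*y-3))
  have huv : uu y = s / q := rfl
  have e1 : t1 n / t2 n = (q^2 + s*q) / (q^2 - s*q) := by
    rw [t1, t2, hsqrt]
    rw [show -((y-2)*(2*y-3)) - s*q = -(q^2 + s*q) by rw [← ha]; ring,
        show -((y-2)*(2*y-3)) + s*q = -(q^2 - s*q) by rw [← ha]; ring]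
    rw [div_div_div_cancel_right₀ hD, neg_div_neg_eq]
  rw [e1, huv]
  have hq0 : q ≠ 0 := ne_of_gt hqpos
  have hd4 : q - s ≠ 0 := ne_of_gt (by linarith)
  have hqs : q^2 - s*q ≠ 0 := by
    intro hc
    have : q*(q - s) = 0 := by linarith [hc]
    rcases mul_eq_zero.1 this with h|h
    · exact hq0 h
    · exact hd4 h
  have hd2 : 1 - s/q ≠ 0 := by
    rw [one_sub_div hq0]
    exact div_ne_zero hd4 hq0
  rw [one_add_div hq0, one_sub_div hq0, div_div_div_cancel_right₀ hq0]
  rw [div_eq_div_iff hqs hd4]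
  ring

lemma g_eq {n : ℕ} (hn : 4 ≤ n) : g n = Real.exp (FF (n:ℝ)) := by
  have hy : (4:ℝ) ≤ (n:ℝ) := by exact_mod_cast hn
  have hu := uu_mem hy
  have h1u : (0:ℝ) < 1 + uu (n:ℝ) := by linarith [hu.1]
  have h2u : (0:ℝ) < 1 - uu (n:ℝ) := by linarith [hu.2]
  have hrpos : 0 < (1 + uu (n:ℝ)) / (1 - uu (n:ℝ)) := div_pos h1u h2u
  rw [g, ratio_eq hn, ← Real.exp_log hrpos, ← Real.exp_nat_mul]
  congr 1
  rw [Real.log_div (ne_of_gt h1u) (ne_of_gt h2u)]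
  rw [FF]
  rw [Nat.cast_sub (by omega : 7 ≤ 2*n)]
  push_cast
  ring


lemma g_mono : StrictMonoOn g (Set.Ici 4) := by
  intro m hm n hn hmn
  have hm' : (4:ℕ) ≤ m := hm
  have hn' : (4:ℕ) ≤ n := hn
  rw [g_eq hm', g_eq hn']
  apply Real.exp_lt_exp.2
  exact FF_mono (Set.mem_Ici.2 (by exact_mod_cast hm')) (Set.mem_Ici.2 (by exact_mod_cast hn'))
    (by exact_mod_cast hmn)

open Filter in
lemma inv_tendsto : Tendsto (fun n : ℕ => ((n:ℝ))⁻¹) atTop (nhds 0) :=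
  tendsto_inv_atTop_zero.comp tendsto_natCast_atTop_atTop

open Filter in
lemma Aa_tendsto : Tendsto (fun n : ℕ => Aa (n:ℝ)) atTop atTop := by
  apply tendsto_atTop_mono' atTop _ tendsto_natCast_atTop_atTop
  filter_upwards [eventually_ge_atTop 4] with n hn
  have : (4:ℝ) ≤ (n:ℝ) := by exact_mod_cast hn
  unfold Aa; nlinarith

open Filter in
lemma uu_tendsto : Tendsto (fun n : ℕ => uu (n:ℝ)) atTop (nhds 0) := by
  have h1 : Tendsto (fun n : ℕ => 3 / Aa (n:ℝ)) atTop (nhds 0) :=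
    tendsto_const_nhds.div_atTop Aa_tendsto
  have h2 := h1.sqrt
  rw [Real.sqrt_zero] at h2
  apply h2.congr
  intro n
  rw [Real.sqrt_div (by norm_num : (0:ℝ) ≤ 3)]
  rfl

open Filter in
lemma rat_tendsto : Tendsto (fun n : ℕ => 3*(2*(n:ℝ)-7)^2 / Aa (n:ℝ)) atTop (nhds 6) := by
  have hmain : Tendsto (fun n : ℕ => (3*(2-7*((n:ℝ))⁻¹)^2)/(2-7*((n:ℝ))⁻¹+6*((n:ℝ))⁻¹^2))
      atTop (nhds 6) := by
    have hnum : Tendsto (fun n : ℕ => 3*(2-7*((n:ℝ))⁻¹)^2) atTop (nhds 12) := by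
      have := ((tendsto_const_nhds (x := (2:ℝ))).sub (inv_tendsto.const_mul 7)).pow 2
      have h2 := this.const_mul 3
      convert h2 using 2 <;> norm_num
    have hden : Tendsto (fun n : ℕ => 2-7*((n:ℝ))⁻¹+6*((n:ℝ))⁻¹^2) atTop (nhds 2) := by
      have := ((tendsto_const_nhds (x := (2:ℝ))).sub (inv_tendsto.const_mul 7)).add
        ((inv_tendsto.pow 2).const_mul 6)
      convert this using 2 <;> norm_num
    have := hnum.div hden (by norm_num)
    convert this using 2 <;> norm_num
  apply hmain.congr'
  filter_upwards [eventually_ge_atTop 4] with n hn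
  have hy : (4:ℝ) ≤ (n:ℝ) := by exact_mod_cast hn
  have hn0 : ((n:ℝ)) ≠ 0 := by intro hc; rw [hc] at hy; norm_num at hy
  have hA0 : Aa (n:ℝ) ≠ 0 := ne_of_gt (by linarith [Aa_ge hy])
  have hi1 : (0:ℝ) < ((n:ℝ))⁻¹ := by positivity
  have hi2 : ((n:ℝ))⁻¹ ≤ 1/4 := by
    rw [inv_le_comm₀ (by linarith) (by norm_num)]
    linarith
  have hden0 : (2:ℝ) - 7*((n:ℝ))⁻¹ + 6*((n:ℝ))⁻¹^2 ≠ 0 := by nlinarith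
  have hB : (n:ℝ)^3*6 - (n:ℝ)^4*7 + (n:ℝ)^5*2 ≠ 0 := by
    have h1 : (0:ℝ) < (n:ℝ)^3 := by positivity
    have h2 : (0:ℝ) < 2*(n:ℝ)^2 - 7*(n:ℝ) + 6 := by nlinarith
    have := mul_pos h1 h2
    intro hc
    nlinarith
  unfold Aa at hA0 ⊢
  rw [div_eq_div_iff hden0 hA0]
  field_simp

open Filter in
lemma c_tendsto : Tendsto (fun n : ℕ => (2*(n:ℝ)-7) * uu (n:ℝ)) atTop (nhds (Real.sqrt 6)) := by
  have h := rat_tendsto.sqrt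
  rw [show Real.sqrt 6 = Real.sqrt 6 from rfl] at h
  have h6 : Real.sqrt ((6:ℝ)) = Real.sqrt 6 := rfl
  apply h.congr'
  filter_upwards [eventually_ge_atTop 4] with n hn
  have hy : (4:ℝ) ≤ (n:ℝ) := by exact_mod_cast hn
  rw [Real.sqrt_div (by positivity : (0:ℝ) ≤ 3*(2*(n:ℝ)-7)^2),
      Real.sqrt_mul (by norm_num : (0:ℝ) ≤ 3),
      Real.sqrt_sq (by linarith : (0:ℝ) ≤ 2*(n:ℝ)-7)]
  show Real.sqrt 3 * (2*(n:ℝ)-7) / Real.sqrt (Aa (n:ℝ)) = (2*(n:ℝ)-7) * (Real.sqrt 3 / Real.sqrt (Aa (n:ℝ)))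
  ring

open Filter in
lemma FF_tendsto : Tendsto (fun n : ℕ => FF (n:ℝ)) atTop (nhds (2*Real.sqrt 6)) := by
  have hu0 := uu_tendsto
  have hc := c_tendsto
  have hlow : Tendsto (fun n : ℕ => (2*(n:ℝ)-7) * uu (n:ℝ) + ((2*(n:ℝ)-7) * uu (n:ℝ)) / (1 + uu (n:ℝ)))
      atTop (nhds (Real.sqrt 6 + Real.sqrt 6 / (1+0))) :=
    hc.add (hc.div (tendsto_const_nhds.add hu0) (by norm_num))
  have hupp : Tendsto (fun n : ℕ => (2*(n:ℝ)-7) * uu (n:ℝ) + ((2*(n:ℝ)-7) * uu (n:ℝ)) / (1 - uu (n:ℝ)))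
      atTop (nhds (Real.sqrt 6 + Real.sqrt 6 / (1-0))) :=
    hc.add (hc.div (tendsto_const_nhds.sub hu0) (by norm_num))
  have e1 : Real.sqrt 6 + Real.sqrt 6 / (1+0) = 2*Real.sqrt 6 := by norm_num; ring
  have e2 : Real.sqrt 6 + Real.sqrt 6 / (1-0) = 2*Real.sqrt 6 := by norm_num; ring
  rw [e1] at hlow
  rw [e2] at hupp
  apply tendsto_of_tendsto_of_tendsto_of_le_of_le' hlow hupp
  · filter_upwards [eventually_ge_atTop 4] with n hn
    have hy : (4:ℝ) ≤ (n:ℝ) := by exact_mod_cast hn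
    have hu := uu_mem hy
    set u := uu (n:ℝ) with hu_def
    have h1u : (0:ℝ) < 1 + u := by linarith [hu.1]
    have h2u : (0:ℝ) < 1 - u := by linarith [hu.2]
    have lb1 : 1 - (1+u)⁻¹ ≤ Real.log (1+u) := by
      have := Real.log_le_sub_one_of_pos (inv_pos.2 h1u)
      rw [Real.log_inv] at this
      linarith
    have elb : 1 - (1+u)⁻¹ = u/(1+u) := by field_simp; ring
    have lb2 : Real.log (1-u) ≤ -u := by
      have := Real.log_le_sub_one_of_pos h2u
      linarith
    calc (2*(n:ℝ)-7) * u + ((2*(n:ℝ)-7) * u) / (1 + u)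
        = (2*(n:ℝ)-7) * (u/(1+u) + u) := by ring
      _ ≤ (2*(n:ℝ)-7) * (Real.log (1+u) - Real.log (1-u)) := by
          apply mul_le_mul_of_nonneg_left _ (by linarith)
          rw [← elb] at *
          linarith
      _ = FF (n:ℝ) := rfl
  · filter_upwards [eventually_ge_atTop 4] with n hn
    have hy : (4:ℝ) ≤ (n:ℝ) := by exact_mod_cast hn
    have hu := uu_mem hy
    set u := uu (n:ℝ) with hu_def
    have h1u : (0:ℝ) < 1 + u := by linarith [hu.1]
    have h2u : (0:ℝ) < 1 - u := by linarith [hu.2]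
    have ub1 : Real.log (1+u) ≤ u := by
      have := Real.log_le_sub_one_of_pos h1u
      linarith
    have ub2 : -Real.log (1-u) ≤ u/(1-u) := by
      have := Real.log_le_sub_one_of_pos (inv_pos.2 h2u)
      rw [Real.log_inv] at this
      have e : (1-u)⁻¹ - 1 = u/(1-u) := by field_simp; ring
      linarith
    calc FF (n:ℝ) = (2*(n:ℝ)-7) * (Real.log (1+u) - Real.log (1-u)) := rfl
      _ ≤ (2*(n:ℝ)-7) * (u + u/(1-u)) := by
          apply mul_le_mul_of_nonneg_left _ (by linarith)
          linarith
      _ = (2*(n:ℝ)-7) * u + ((2*(n:ℝ)-7) * u) / (1 - u) := by ring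

open Filter in
lemma g_tendsto : Tendsto g atTop (nhds (Real.exp (2*Real.sqrt 6))) := by
  have h := (Real.continuous_exp.tendsto (2*Real.sqrt 6)).comp FF_tendsto
  apply h.congr'
  filter_upwards [eventually_ge_atTop 4] with n hn
  exact (g_eq hn).symm

theorem stmt14 :
    StrictMonoOn g (Set.Ici 4) ∧
    Filter.Tendsto g Filter.atTop (nhds (Real.exp (2 * Real.sqrt 6))) := by
  exact ⟨g_mono, g_tendsto⟩
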